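/- arXiv:1210.4528 — 3 statements merged into one kernel-verified Lean document; each statement's English description precedes it below -/
import Mathlib

section
/- The B^r seminorm is the largest seminorm |·|' on Dirac k-chains in ℝⁿ such that (i) |A|' ≤ ‖A‖_{B^0} (the mass norm) for all A, and (ii) |Δ_u A|' ≤ ‖u‖ ‖A‖_{B^{r-1}} for all A and u ∈ ℝⁿ, where r ≥ 1. -/
noncomputable section

open Finsupp Pointwise

variable {n : ℕ} {V : Type*} [NormedAddCommGroup V] [NormedSpace ℝ V]

/-- A Dirac `k`-chain in `ℝⁿ` is a finitely supported function from points of `ℝⁿ` to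
`k`-vectors (modelled by a normed space `V`); the `k`-element `(p;α)` is `Finsupp.single p α`. -/
abbrev DiracChain (n : ℕ) (V : Type*) [NormedAddCommGroup V] [NormedSpace ℝ V] :=
  EuclideanSpace ℝ (Fin n) →₀ V

/-- Translation `T_u` of a Dirac chain through the vector `u`. -/
def translateChain (u : EuclideanSpace ℝ (Fin n)) (A : DiracChain n V) : DiracChain n V :=
  Finsupp.mapDomain (· + u) A

/-- The `j`-difference `k`-chain `Δ_{σ}(p;α)` for `σ = u₁∘⋯∘u_j`: the iterated difference
`(T_{u_1}-Id)⋯(T_{u_j}-Id)(p;α)`, written out as the alternating sum over subsets. -/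
def diffChain (p : EuclideanSpace ℝ (Fin n)) (α : V) {j : ℕ}
    (u : Fin j → EuclideanSpace ℝ (Fin n)) : DiracChain n V :=
  ∑ S : Finset (Fin j), ((-1 : ℝ) ^ (j - S.card)) •
    Finsupp.single (p + ∑ i ∈ S, u i) α

/-- The set of costs `Σᵢ ‖σᵢ‖‖αᵢ‖` of decompositions of `A` into difference chains of order
at most `r`. -/
def BnormSet (r : ℕ) (A : DiracChain n V) : Set ℝ :=
  {c | ∃ (m : ℕ) (j : Fin m → ℕ) (p : Fin m → EuclideanSpace ℝ (Fin n)) (α : Fin m → V)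
      (u : ∀ i : Fin m, Fin (j i) → EuclideanSpace ℝ (Fin n)),
    (∀ i, j i ≤ r) ∧ (A = ∑ i, diffChain (p i) (α i) (u i)) ∧
    c = ∑ i, (∏ l, ‖u i l‖) * ‖α i‖}

/-- The `B^r` seminorm of a Dirac chain: the infimum over all decompositions into difference
chains of order at most `r` of the total cost. -/
def Bnorm (r : ℕ) (A : DiracChain n V) : ℝ :=
  sInf (BnormSet r A)

/-- Evaluation of an exterior form `ω` (a function assigning to each point a linear functional
on `k`-vectors) on a Dirac chain. -/
def formEval (ω : EuclideanSpace ℝ (Fin n) → V →ₗ[ℝ] ℝ) (A : DiracChain n V) : ℝ :=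
  A.sum fun p α => ω p α

/-! ### Auxiliary lemmas -/

lemma sum_powerset_map' {α β M : Type*} [AddCommMonoid M] (f : α ↪ β) (s : Finset α)
    (g : Finset β → M) :
    ∑ T ∈ (s.map f).powerset, g T = ∑ T ∈ s.powerset, g (T.map f) := by
  classical
  refine Finset.sum_nbij' (i := fun T => s.filter (fun a => f a ∈ T)) (j := fun T => T.map f)
    ?_ ?_ ?_ ?_ ?_
  · intro T hT
    simp only [Finset.mem_powerset]
    exact Finset.filter_subset _ _
  · intro T hT
    simp only [Finset.mem_powerset] at hT ⊢
    exact Finset.map_subset_map.2 hT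
  · intro T hT
    simp only [Finset.mem_powerset] at hT
    ext b
    simp only [Finset.mem_map, Finset.mem_filter]
    constructor
    · rintro ⟨a, ⟨_, ha⟩, rfl⟩; exact ha
    · intro hb
      obtain ⟨a, ha, rfl⟩ := Finset.mem_map.1 (hT hb)
      exact ⟨a, ⟨ha, hb⟩, rfl⟩
  · intro T hT
    simp only [Finset.mem_powerset] at hT
    ext a
    simp only [Finset.mem_filter, Finset.mem_map]
    constructor
    · rintro ⟨ha, b, hb, hfb⟩
      rwa [← f.injective hfb]
    · intro ha; exact ⟨hT ha, a, ha, rfl⟩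
  · intro T hT
    simp only [Finset.mem_powerset] at hT
    congr 1
    ext b
    simp only [Finset.mem_map, Finset.mem_filter]
    constructor
    · intro hb
      obtain ⟨a, ha, rfl⟩ := Finset.mem_map.1 (hT hb)
      exact ⟨a, ⟨ha, hb⟩, rfl⟩
    · rintro ⟨a, ⟨_, ha⟩, rfl⟩; exact ha

lemma translateChain_single (u q : EuclideanSpace ℝ (Fin n)) (α : V) :
    translateChain u (Finsupp.single q α) = Finsupp.single (q + u) α :=
  Finsupp.mapDomain_single

lemma translateChain_sum {ι : Type*} (u : EuclideanSpace ℝ (Fin n)) (s : Finset ι)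
    (f : ι → DiracChain n V) :
    translateChain u (∑ i ∈ s, f i) = ∑ i ∈ s, translateChain u (f i) :=
  map_sum (Finsupp.mapDomain.addMonoidHom (· + u)) f s

lemma translateChain_smul (u : EuclideanSpace ℝ (Fin n)) (c : ℝ) (A : DiracChain n V) :
    translateChain u (c • A) = c • translateChain u A :=
  Finsupp.mapDomain_smul c A

lemma diffChain_zero' (p : EuclideanSpace ℝ (Fin n)) (α : V)
    (u : Fin 0 → EuclideanSpace ℝ (Fin n)) : diffChain p α u = Finsupp.single p α := by
  unfold diffChain
  rw [show (Finset.univ : Finset (Finset (Fin 0))) = {∅} by decide, Finset.sum_singleton]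
  simp

lemma diffChain_snoc (p : EuclideanSpace ℝ (Fin n)) (α : V) {j : ℕ}
    (v : Fin j → EuclideanSpace ℝ (Fin n)) (w : EuclideanSpace ℝ (Fin n)) :
    diffChain p α (Fin.snoc v w) =
      translateChain w (diffChain p α v) - diffChain p α v := by
  classical
  have hlast : Fin.last j ∉ (Finset.univ : Finset (Fin j)).map Fin.castSuccEmb := by
    simp only [Finset.mem_map, Finset.mem_univ, true_and, not_exists]
    exact fun a h => absurd h (Fin.castSucc_lt_last a).ne
  have key : ∀ T : Finset (Fin j),
      ∑ i ∈ T.map Fin.castSuccEmb, (Fin.snoc v w : Fin (j + 1) → _) i = ∑ i ∈ T, v i := by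
    intro T
    rw [Finset.sum_map]
    exact Finset.sum_congr rfl fun i _ => by
      rw [show (Fin.castSuccEmb i : Fin (j + 1)) = Fin.castSucc i from rfl, Fin.snoc_castSucc]
  have L : (∑ S : Finset (Fin (j + 1)), ((-1 : ℝ) ^ (j + 1 - S.card)) •
        Finsupp.single (p + ∑ i ∈ S, Fin.snoc v w i) α)
      = (∑ T : Finset (Fin j), (-((-1 : ℝ) ^ (j - T.card))) •
          Finsupp.single (p + ∑ i ∈ T, v i) α)
        + ∑ T : Finset (Fin j), ((-1 : ℝ) ^ (j - T.card)) •
          Finsupp.single ((p + ∑ i ∈ T, v i) + w) α := by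
    rw [← Finset.powerset_univ, Fin.univ_castSuccEmb, Finset.cons_eq_insert,
      Finset.sum_powerset_insert hlast, sum_powerset_map', sum_powerset_map',
      Finset.powerset_univ]
    congr 1
    · refine Finset.sum_congr rfl fun T _ => ?_
      have hT : T.card ≤ j := (Finset.card_le_univ T).trans_eq (Finset.card_fin j)
      rw [Finset.card_map, key, show j + 1 - T.card = (j - T.card) + 1 from by omega,
        pow_succ, mul_neg_one]
    · refine Finset.sum_congr rfl fun T _ => ?_
      have hT : T.card ≤ j := (Finset.card_le_univ T).trans_eq (Finset.card_fin j)
      have hl : Fin.last j ∉ T.map Fin.castSuccEmb := fun h =>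
        hlast (Finset.map_subset_map.2 (Finset.subset_univ T) h)
      rw [Finset.sum_insert hl, Finset.card_insert_of_notMem hl, Finset.card_map, key,
        Fin.snoc_last, show j + 1 - (T.card + 1) = j - T.card from by omega,
        show p + (w + ∑ i ∈ T, v i) = (p + ∑ i ∈ T, v i) + w from by abel]
  unfold diffChain
  rw [translateChain_sum]
  simp only [translateChain_smul, translateChain_single]
  rw [L]
  simp only [neg_smul]
  rw [Finset.sum_neg_distrib]
  abel

lemma BnormSet_nonneg {r : ℕ} {A : DiracChain n V} : ∀ c ∈ BnormSet r A, (0 : ℝ) ≤ c := by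
  rintro c ⟨m, j, p, α, u, -, -, rfl⟩
  positivity

lemma BnormSet_bddBelow (r : ℕ) (A : DiracChain n V) : BddBelow (BnormSet r A) :=
  ⟨0, fun _ hc => BnormSet_nonneg _ hc⟩

lemma BnormSet_nonempty (r : ℕ) (A : DiracChain n V) : (BnormSet r A).Nonempty := by
  classical
  refine ⟨_, A.support.card, fun _ => 0, fun i => (A.support.equivFin.symm i : _),
    fun i => A (A.support.equivFin.symm i : _), fun i x => x.elim0,
    fun i => Nat.zero_le r, ?_, rfl⟩
  simp only [diffChain_zero']
  rw [show (∑ i : Fin A.support.card,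
      Finsupp.single ((A.support.equivFin.symm i : _) : EuclideanSpace ℝ (Fin n))
        (A (A.support.equivFin.symm i : _)))
    = ∑ s : A.support, Finsupp.single (s : EuclideanSpace ℝ (Fin n)) (A s) from
      Equiv.sum_comp A.support.equivFin.symm
        (fun s : A.support => Finsupp.single (s : EuclideanSpace ℝ (Fin n)) (A s))]
  rw [Finset.sum_coe_sort A.support (fun s => Finsupp.single s (A s))]
  exact (Finsupp.sum_single A).symm

lemma mem_BnormSet_diffChain (r : ℕ) (p : EuclideanSpace ℝ (Fin n)) (α : V) {j : ℕ}
    (hj : j ≤ r) (u : Fin j → EuclideanSpace ℝ (Fin n)) :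
    (∏ l, ‖u l‖) * ‖α‖ ∈ BnormSet r (diffChain p α u) :=
  ⟨1, fun _ => j, fun _ => p, fun _ => α, fun _ => u, fun _ => hj,
    by simp, by simp⟩

lemma Bnorm_diffChain_le (r : ℕ) (p : EuclideanSpace ℝ (Fin n)) (α : V) {j : ℕ}
    (hj : j ≤ r) (u : Fin j → EuclideanSpace ℝ (Fin n)) :
    Bnorm r (diffChain p α u) ≤ (∏ l, ‖u l‖) * ‖α‖ :=
  csInf_le (BnormSet_bddBelow _ _) (mem_BnormSet_diffChain r p α hj u)

lemma seminorm_sum_le {ι : Type*} (N : Seminorm ℝ (DiracChain n V)) (s : Finset ι)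
    (f : ι → DiracChain n V) : N (∑ i ∈ s, f i) ≤ ∑ i ∈ s, N (f i) := by
  classical
  induction s using Finset.induction with
  | empty => simp
  | @insert a s h ih =>
    rw [Finset.sum_insert h, Finset.sum_insert h]
    exact (map_add_le_add N _ _).trans (by gcongr)

lemma N_diffChain_le (r : ℕ) (hr : 1 ≤ r) (N : Seminorm ℝ (DiracChain n V))
    (h0 : ∀ A : DiracChain n V, N A ≤ Bnorm 0 A)
    (h1 : ∀ (A : DiracChain n V) (u : EuclideanSpace ℝ (Fin n)),
      N (translateChain u A - A) ≤ ‖u‖ * Bnorm (r - 1) A)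
    {j : ℕ} (hj : j ≤ r) (p : EuclideanSpace ℝ (Fin n)) (α : V)
    (u : Fin j → EuclideanSpace ℝ (Fin n)) :
    N (diffChain p α u) ≤ (∏ l, ‖u l‖) * ‖α‖ := by
  cases j with
  | zero =>
    rw [diffChain_zero' p α u]
    simp only [Finset.univ_eq_empty, Finset.prod_empty, one_mul]
    refine (h0 _).trans ?_
    have := Bnorm_diffChain_le 0 p α (le_refl 0) u
    rw [diffChain_zero' p α u] at this
    simpa using this
  | succ k =>
    have hu : u = Fin.snoc (Fin.init u) (u (Fin.last k)) := (Fin.snoc_init_self u).symm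
    calc N (diffChain p α u)
        = N (translateChain (u (Fin.last k)) (diffChain p α (Fin.init u))
            - diffChain p α (Fin.init u)) := by
          conv_lhs => rw [hu, diffChain_snoc]
      _ ≤ ‖u (Fin.last k)‖ * Bnorm (r - 1) (diffChain p α (Fin.init u)) := h1 _ _
      _ ≤ ‖u (Fin.last k)‖ * ((∏ l, ‖Fin.init u l‖) * ‖α‖) := by
          refine mul_le_mul_of_nonneg_left ?_ (norm_nonneg _)
          exact Bnorm_diffChain_le (r - 1) p α (by omega) (Fin.init u)
      _ = (∏ l, ‖u l‖) * ‖α‖ := by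
          rw [Fin.prod_univ_castSucc (f := fun l => ‖u l‖)]
          simp only [Fin.init]
          ring

/-- for `r ≥ 1`, the `B^r` seminorm is the largest seminorm `|·|'` on Dirac
chains such that (i) `|A|' ≤ ‖A‖_{B^0}` (the mass norm) and (ii)
`|Δ_u A|' ≤ ‖u‖·‖A‖_{B^{r-1}}`: it satisfies both properties, and any seminorm satisfying
them is dominated by it. -/
theorem Bnorm_largest_seminorm' (n r : ℕ) (hr : 1 ≤ r) {V : Type*} [NormedAddCommGroup V]
    [NormedSpace ℝ V] :
    ((∀ A : DiracChain n V, Bnorm r A ≤ Bnorm 0 A) ∧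
      (∀ (A : DiracChain n V) (u : EuclideanSpace ℝ (Fin n)),
        Bnorm r (translateChain u A - A) ≤ ‖u‖ * Bnorm (r - 1) A)) ∧
    (∀ N : Seminorm ℝ (DiracChain n V),
      (∀ A : DiracChain n V, N A ≤ Bnorm 0 A) →
      (∀ (A : DiracChain n V) (u : EuclideanSpace ℝ (Fin n)),
        N (translateChain u A - A) ≤ ‖u‖ * Bnorm (r - 1) A) →
      ∀ A : DiracChain n V, N A ≤ Bnorm r A) := by
  constructor
  · constructor
    · -- Bnorm r ≤ Bnorm 0
      intro A
      exact csInf_le_csInf (BnormSet_bddBelow r A) (BnormSet_nonempty 0 A)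
        (fun c => fun ⟨m, j, p, α, u, hj, hA, hc⟩ =>
          ⟨m, j, p, α, u, fun i => (hj i).trans (Nat.zero_le r), hA, hc⟩)
    · -- Bnorm r (Δ_u A) ≤ ‖u‖ * Bnorm (r-1) A
      intro A u
      have hmem : ∀ c ∈ BnormSet (r - 1) A, ‖u‖ * c ∈ BnormSet r (translateChain u A - A) := by
        rintro c ⟨m, j, p, α, w, hj, hA, rfl⟩
        refine ⟨m, fun i => j i + 1, p, α, fun i => Fin.snoc (w i) u,
          fun i => by have := hj i; show j i + 1 ≤ r; omega, ?_, ?_⟩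
        · rw [hA, translateChain_sum, ← Finset.sum_sub_distrib]
          exact Finset.sum_congr rfl fun i _ => (diffChain_snoc (p i) (α i) (w i) u).symm
        · rw [Finset.mul_sum]
          refine Finset.sum_congr rfl fun i _ => ?_
          rw [Fin.prod_univ_castSucc]
          simp only [Fin.snoc_castSucc, Fin.snoc_last]
          ring
      have h1 : Bnorm r (translateChain u A - A) ≤ sInf (‖u‖ • BnormSet (r - 1) A) := by
        refine le_csInf ?_ ?_
        · exact (BnormSet_nonempty (r - 1) A).smul_set
        · rintro b ⟨c, hc, rfl⟩
          exact csInf_le (BnormSet_bddBelow _ _) (hmem c hc)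
      calc Bnorm r (translateChain u A - A) ≤ sInf (‖u‖ • BnormSet (r - 1) A) := h1
        _ = ‖u‖ * Bnorm (r - 1) A := Real.sInf_smul_of_nonneg (norm_nonneg u) _
  · intro N h0 h1 A
    refine le_csInf (BnormSet_nonempty r A) ?_
    rintro c ⟨m, j, p, α, u, hj, rfl, rfl⟩
    exact (seminorm_sum_le N _ _).trans
      (Finset.sum_le_sum fun i _ => N_diffChain_le r hr N h0 h1 (hj i) (p i) (α i) (u i))

end
end

section
/- Let E_n ⊂ [0,1] be the n-th stage of the middle-third Cantor construction (union of 2ⁿ closed intervals of length 3⁻ⁿ), and let μ_n be the measure (3/2)ⁿ · (Lebesgue measure restricted to E_n). Then for every Lipschitz function f : [0,1] → ℝ, the integrals ∫ f dμ_n converge as n → ∞, and in fact |∫ f dμ_n − ∫ f dμ_{n+1}| ≤ C·Lip(f)·3⁻ⁿ for a universal constant C; consequently (μ_n) converges weakly to the standard Cantor measure. -/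
open MeasureTheory Filter Topology

noncomputable section

/-- The `n`-th stage `E_n ⊆ [0,1]` of the middle-third Cantor construction: `E_0 = [0,1]` and
`E_{n+1}` is the union of the two affine images of `E_n` scaled by `1/3` into the outer
thirds (equivalently, `E_n` with the open middle third of each component removed). -/
def cantorStage : ℕ → Set ℝ
  | 0 => Set.Icc 0 1
  | n + 1 => (fun x => x / 3) '' cantorStage n ∪ (fun x => x / 3 + 2 / 3) '' cantorStage n

/-- The renormalized measure `μ_n := (3/2)ⁿ · Leb|_{E_n}`. -/
def cantorApprox (n : ℕ) : Measure ℝ :=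
  ((3 / 2 : ENNReal)) ^ n • volume.restrict (cantorStage n)


section CantorAux
open Set

lemma cantorStage_isCompact (n : ℕ) : IsCompact (cantorStage n) := by
  induction n with
  | zero => exact isCompact_Icc
  | succ n ih =>
    exact (ih.image (by continuity)).union (ih.image (by continuity))

lemma cantorStage_measurable (n : ℕ) : MeasurableSet (cantorStage n) :=
  (cantorStage_isCompact n).isClosed.measurableSet

lemma cantorStage_subset (n : ℕ) : cantorStage n ⊆ Set.Icc 0 1 := by
  induction n with
  | zero => exact subset_rfl
  | succ n ih =>
    rintro x (⟨y, hy, rfl⟩ | ⟨y, hy, rfl⟩) <;>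
      obtain ⟨h0, h1⟩ := ih hy <;> constructor <;> dsimp <;> linarith

lemma image_subset_left (n : ℕ) : (fun x : ℝ => x / 3) '' cantorStage n ⊆ Set.Icc 0 3⁻¹ := by
  rintro x ⟨y, hy, rfl⟩
  obtain ⟨h0, h1⟩ := cantorStage_subset n hy
  constructor <;> dsimp <;> linarith

lemma image_subset_right (n : ℕ) :
    (fun x : ℝ => x / 3 + 2 / 3) '' cantorStage n ⊆ Set.Icc (2/3) 1 := by
  rintro x ⟨y, hy, rfl⟩
  obtain ⟨h0, h1⟩ := cantorStage_subset n hy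
  constructor <;> dsimp <;> linarith

lemma images_disjoint (n : ℕ) :
    Disjoint ((fun x : ℝ => x / 3) '' cantorStage n)
      ((fun x : ℝ => x / 3 + 2 / 3) '' cantorStage n) := by
  refine Set.disjoint_left.2 fun x hx hx' => ?_
  have h1 := (image_subset_left n hx).2
  have h2 := (image_subset_right n hx').1
  norm_num at h1
  linarith



lemma map_affine (c : ℝ) :
    Measure.map (fun x : ℝ => x / 3 + c) volume = (3 : ENNReal) • volume := by
  have h1 : (fun x : ℝ => x / 3 + c) = (fun y : ℝ => y + c) ∘ (fun x : ℝ => 3⁻¹ * x) := by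
    funext x; simp [div_eq_inv_mul, Function.comp]
  rw [h1, ← Measure.map_map (measurable_add_const c) (measurable_const_mul _)]
  rw [Real.map_volume_mul_left (by norm_num : (3:ℝ)⁻¹ ≠ 0)]
  simp only [Measure.map_smul]
  rw [map_add_right_eq_self volume c]
  norm_num

lemma affine_injective (c : ℝ) : Function.Injective (fun x : ℝ => x / 3 + c) := by
  intro a b h
  dsimp at h
  linarith

lemma restrict_image (c : ℝ) {E : Set ℝ} (hE : MeasurableSet E)
    (hIm : MeasurableSet ((fun x : ℝ => x / 3 + c) '' E)) :
    volume.restrict ((fun x : ℝ => x / 3 + c) '' E)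
      = (3 : ENNReal)⁻¹ • Measure.map (fun x : ℝ => x / 3 + c) (volume.restrict E) := by
  have h1 : (volume : Measure ℝ)
      = (3 : ENNReal)⁻¹ • Measure.map (fun x : ℝ => x / 3 + c) volume := by
    rw [map_affine, smul_smul, ENNReal.inv_mul_cancel (by norm_num) (by norm_num), one_smul]
  conv_lhs => rw [h1]
  rw [Measure.restrict_smul, Measure.restrict_map (by measurability) hIm,
    Set.preimage_image_eq E (affine_injective c)]

lemma setIntegral_image_affine (c : ℝ) {E : Set ℝ} (hE : IsCompact E)
    (f : ℝ → ℝ) (hf : Continuous f) :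
    ∫ x in ((fun x : ℝ => x / 3 + c) '' E), f x = (3:ℝ)⁻¹ * ∫ x in E, f (x / 3 + c) := by
  rw [restrict_image c hE.measurableSet (hE.image (by continuity)).measurableSet]
  rw [integral_smul_measure, integral_map (by measurability) hf.aestronglyMeasurable]
  simp [ENNReal.toReal_inv]

/-- Averaging operator. -/
def Sop (f : ℝ → ℝ) : ℝ → ℝ := fun y => (f (y / 3) + f (y / 3 + 2 / 3)) / 2

lemma Sop_continuous {f : ℝ → ℝ} (hf : Continuous f) : Continuous (Sop f) := by
  unfold Sop; continuity

lemma image_eq_left (E : Set ℝ) : (fun x : ℝ => x / 3) '' E = (fun x : ℝ => x / 3 + 0) '' E := by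
  simp

lemma setIntegral_stage_succ (n : ℕ) (f : ℝ → ℝ) (hf : Continuous f) :
    ∫ x in cantorStage (n+1), f x
      = (3:ℝ)⁻¹ * ((∫ x in cantorStage n, f (x / 3)) + ∫ x in cantorStage n, f (x / 3 + 2/3)) := by
  have hE := cantorStage_isCompact n
  have h1 : cantorStage (n+1)
      = (fun x : ℝ => x / 3) '' cantorStage n ∪ (fun x : ℝ => x / 3 + 2/3) '' cantorStage n := rfl
  rw [h1, setIntegral_union (images_disjoint n)
      (hE.image (by continuity)).measurableSet
      (hf.continuousOn.integrableOn_compact (hE.image (by continuity)))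
      (hf.continuousOn.integrableOn_compact (hE.image (by continuity)))]
  rw [image_eq_left, setIntegral_image_affine 0 hE f hf, setIntegral_image_affine (2/3) hE f hf]
  ring_nf

lemma volume_image_affine (c : ℝ) {E : Set ℝ} (hE : IsCompact E) :
    volume ((fun x : ℝ => x / 3 + c) '' E) = (3:ENNReal)⁻¹ * volume E := by
  have h := restrict_image c hE.measurableSet (hE.image (by continuity)).measurableSet
  have h2 := congrArg (fun μ : Measure ℝ => μ Set.univ) h
  simp only [Measure.smul_apply, Measure.restrict_apply_univ, smul_eq_mul] at h2
  rw [Measure.map_apply (by measurability) MeasurableSet.univ, Set.preimage_univ,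
    Measure.restrict_apply_univ] at h2
  exact h2

lemma volume_cantorStage (n : ℕ) : volume (cantorStage n) = ((2:ENNReal)/3) ^ n := by
  induction n with
  | zero => simp [cantorStage, Real.volume_Icc]
  | succ n ih =>
    have h1 : cantorStage (n+1)
        = (fun x : ℝ => x / 3) '' cantorStage n ∪ (fun x : ℝ => x / 3 + 2/3) '' cantorStage n :=
      rfl
    have hE := cantorStage_isCompact n
    rw [h1, measure_union (images_disjoint n) (hE.image (by continuity)).measurableSet]
    rw [image_eq_left, volume_image_affine 0 hE, volume_image_affine (2/3) hE, ih]
    rw [pow_succ]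
    rw [show ((2:ENNReal)/3) = 2 * 3⁻¹ by rw [ENNReal.div_eq_inv_mul]; ring]
    ring

instance cantorApprox_prob (n : ℕ) : IsProbabilityMeasure (cantorApprox n) := by
  constructor
  rw [cantorApprox, Measure.smul_apply, Measure.restrict_apply_univ, volume_cantorStage,
    smul_eq_mul, ← mul_pow]
  have h2 : (3:ENNReal)/2 * (2/3) = 1 := by
    rw [ENNReal.div_eq_inv_mul, ENNReal.div_eq_inv_mul]
    rw [show (2:ENNReal)⁻¹ * 3 * (3⁻¹ * 2) = (3⁻¹ * 3) * (2⁻¹ * 2) by ring]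
    rw [ENNReal.inv_mul_cancel (by norm_num) (by norm_num),
      ENNReal.inv_mul_cancel (by norm_num) (by norm_num), one_mul]
  rw [h2, one_pow]

lemma mu_step (n : ℕ) (f : ℝ → ℝ) (hf : Continuous f) :
    ∫ x, f x ∂cantorApprox (n+1) = ∫ x, Sop f x ∂cantorApprox n := by
  have hE := cantorStage_isCompact n
  rw [cantorApprox, cantorApprox, integral_smul_measure, integral_smul_measure]
  rw [setIntegral_stage_succ n f hf]
  have hInt1 : IntegrableOn (fun x => f (x/3)) (cantorStage n) volume :=
    ((hf.comp (by continuity)).continuousOn).integrableOn_compact hE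
  have hInt2 : IntegrableOn (fun x => f (x/3 + 2/3)) (cantorStage n) volume :=
    ((hf.comp (by continuity)).continuousOn).integrableOn_compact hE
  have hS : ∫ x in cantorStage n, Sop f x
      = ((∫ x in cantorStage n, f (x / 3)) + ∫ x in cantorStage n, f (x / 3 + 2/3)) / 2 := by
    unfold Sop
    rw [integral_div, integral_add hInt1 hInt2]
  rw [hS]
  have ht : ((3/2 : ENNReal) ^ (n+1)).toReal = (3/2 : ℝ)^(n+1) := by
    rw [ENNReal.toReal_pow, ENNReal.toReal_div]
    norm_num
  have ht2 : ((3/2 : ENNReal) ^ n).toReal = (3/2 : ℝ)^n := by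
    rw [ENNReal.toReal_pow, ENNReal.toReal_div]
    norm_num
  rw [ht, ht2, pow_succ]
  simp only [smul_eq_mul]
  ring

lemma Sop_lipschitz {f : ℝ → ℝ} {K : NNReal} (hf : LipschitzWith K f) :
    LipschitzWith (K * 3⁻¹) (Sop f) := by
  apply LipschitzWith.of_dist_le_mul
  intro x y
  have h1 := hf.dist_le_mul (x/3) (y/3)
  have h2 := hf.dist_le_mul (x/3 + 2/3) (y/3 + 2/3)
  have e1 : dist (x/3) (y/3) = dist x y / 3 := by
    rw [Real.dist_eq, Real.dist_eq, show x/3 - y/3 = (x - y)/3 by ring, abs_div]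
    norm_num
  have e2 : dist (x/3 + 2/3) (y/3 + 2/3) = dist x y / 3 := by
    rw [Real.dist_eq, Real.dist_eq, show x/3 + 2/3 - (y/3 + 2/3) = (x - y)/3 by ring, abs_div]
    norm_num
  rw [e1] at h1; rw [e2] at h2
  have : dist (Sop f x) (Sop f y)
      ≤ (dist (f (x/3)) (f (y/3)) + dist (f (x/3+2/3)) (f (y/3+2/3))) / 2 := by
    unfold Sop
    rw [Real.dist_eq, Real.dist_eq, Real.dist_eq]
    rw [show (f (x/3) + f (x/3+2/3))/2 - (f (y/3) + f (y/3+2/3))/2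
        = ((f (x/3) - f (y/3)) + (f (x/3+2/3) - f (y/3+2/3)))/2 by ring]
    rw [abs_div]
    rw [abs_of_nonneg (by norm_num : (0:ℝ) ≤ 2)]
    have := abs_add_le (f (x/3) - f (y/3)) (f (x/3+2/3) - f (y/3+2/3))
    linarith
  push_cast
  nlinarith [dist_nonneg (x := x) (y := y)]

lemma Sop_iter_continuous (n : ℕ) {f : ℝ → ℝ} (hf : Continuous f) :
    Continuous (Sop^[n] f) := by
  induction n generalizing f with
  | zero => exact hf
  | succ n ih =>
    rw [Function.iterate_succ_apply]
    exact ih (Sop_continuous hf)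

lemma Sop_iter_lipschitz (n : ℕ) {f : ℝ → ℝ} {K : NNReal} (hf : LipschitzWith K f) :
    LipschitzWith (K * 3⁻¹ ^ n) (Sop^[n] f) := by
  induction n generalizing f K with
  | zero => simpa using hf
  | succ n ih =>
    rw [Function.iterate_succ_apply]
    have := ih (Sop_lipschitz hf)
    convert this using 1
    rw [pow_succ]
    ring

lemma mu_shift (m n : ℕ) (f : ℝ → ℝ) (hf : Continuous f) :
    ∫ x, f x ∂cantorApprox (m + n) = ∫ x, (Sop^[n] f) x ∂cantorApprox m := by
  induction n generalizing f with
  | zero => simp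
  | succ n ih =>
    have h1 : m + (n+1) = (m + n) + 1 := rfl
    rw [h1, mu_step (m+n) f hf, ih (Sop f) (Sop_continuous hf),
      Function.iterate_succ_apply]

lemma cantorApprox_ae (n : ℕ) : ∀ᵐ x ∂cantorApprox n, x ∈ Set.Icc (0:ℝ) 1 := by
  rw [cantorApprox]
  refine Measure.ae_smul_measure ?_ _
  filter_upwards [ae_restrict_mem (cantorStage_measurable n)] with x hx
  exact cantorStage_subset n hx

lemma key_bound {μ : Measure ℝ} [IsProbabilityMeasure μ]
    (hμ : ∀ᵐ x ∂μ, x ∈ Set.Icc (0:ℝ) 1) {f : ℝ → ℝ} {K : NNReal}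
    (hf : LipschitzWith K f) : |(∫ x, f x ∂μ) - f 0| ≤ K := by
  have hbd : ∀ᵐ x ∂μ, ‖f x - f 0‖ ≤ (K:ℝ) := by
    filter_upwards [hμ] with x hx
    have h1 := hf.dist_le_mul x 0
    rw [Real.dist_eq, Real.dist_eq, sub_zero] at h1
    have : |x| ≤ 1 := abs_le.2 ⟨by linarith [hx.1], hx.2⟩
    calc ‖f x - f 0‖ = |f x - f 0| := rfl
      _ ≤ K * |x| := h1
      _ ≤ K * 1 := by nlinarith [K.coe_nonneg]
      _ = K := mul_one _
  have hint : Integrable f μ := by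
    refine (integrable_const (|f 0| + (K:ℝ))).mono' hf.continuous.aestronglyMeasurable ?_
    filter_upwards [hbd] with x hx
    have h2 : ‖f x‖ - ‖f 0‖ ≤ ‖f x - f 0‖ := norm_sub_norm_le _ _
    simp only [Real.norm_eq_abs] at *
    linarith
  have : (∫ x, f x ∂μ) - f 0 = ∫ x, (f x - f 0) ∂μ := by
    rw [integral_sub hint (integrable_const _), integral_const]
    simp
  rw [this]
  calc |∫ x, (f x - f 0) ∂μ| = ‖∫ x, (f x - f 0) ∂μ‖ := rfl
    _ ≤ K * (μ Set.univ).toReal := norm_integral_le_of_norm_le_const hbd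
    _ = K := by simp

/-- `n`-th binary digit of `x` (as a real number `0` or `1`). -/
def bit (n : ℕ) (x : ℝ) : ℝ := if Int.fract (x * 2 ^ n) < 1/2 then 0 else 1

lemma bit_nonneg (n : ℕ) (x : ℝ) : 0 ≤ bit n x := by unfold bit; split <;> norm_num

lemma bit_le_one (n : ℕ) (x : ℝ) : bit n x ≤ 1 := by unfold bit; split <;> norm_num

lemma bit_measurable (n : ℕ) : Measurable (bit n) := by
  unfold bit
  exact Measurable.ite
    (measurableSet_lt ((measurable_id.mul_const _).fract) measurable_const)
    measurable_const measurable_const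

lemma bit_succ (n : ℕ) (x : ℝ) : bit (n+1) x = bit n (2 * x) := by
  unfold bit
  rw [show x * 2 ^ (n+1) = (2 * x) * 2 ^ n by ring]

lemma bit_succ' (n : ℕ) (x : ℝ) : bit (n+1) x = bit n (2 * x - 1) := by
  unfold bit
  rw [show (2 * x - 1) * 2 ^ n = x * 2 ^ (n+1) - ((2^n : ℤ) : ℝ) by push_cast; ring,
    Int.fract_sub_intCast]

lemma geom_term (n : ℕ) : (2:ℝ) / 3 ^ (n+1) = (2/3) * 3⁻¹ ^ n := by
  rw [pow_succ, inv_pow]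
  field_simp

lemma summable_geom : Summable (fun n : ℕ => (2:ℝ) / 3 ^ (n+1)) := by
  simp_rw [geom_term]
  exact (summable_geometric_of_lt_one (by norm_num) (by norm_num)).mul_left _

lemma tsum_geom : ∑' n : ℕ, (2:ℝ) / 3 ^ (n+1) = 1 := by
  simp_rw [geom_term]
  rw [tsum_mul_left, tsum_geometric_of_lt_one (by norm_num) (by norm_num)]
  norm_num

/-- The map sending `x` to the Cantor-set point with ternary digits `2·(binary digits of x)`. -/
def cantorFun (x : ℝ) : ℝ := ∑' n : ℕ, bit n x * (2 / 3 ^ (n+1))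

lemma summable_bit (x : ℝ) : Summable (fun n : ℕ => bit n x * (2 / 3 ^ (n+1))) := by
  refine Summable.of_nonneg_of_le (fun n => ?_) (fun n => ?_) summable_geom
  · exact mul_nonneg (bit_nonneg n x) (by positivity)
  · have := mul_le_mul_of_nonneg_right (bit_le_one n x)
      (show (0:ℝ) ≤ 2 / 3 ^ (n+1) by positivity)
    simpa using this

lemma cantorFun_nonneg (x : ℝ) : 0 ≤ cantorFun x :=
  tsum_nonneg fun n => mul_nonneg (bit_nonneg n x) (by positivity)

lemma cantorFun_le_one (x : ℝ) : cantorFun x ≤ 1 := by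
  rw [← tsum_geom]
  refine (summable_bit x).tsum_le_tsum (fun n => ?_) summable_geom
  have := mul_le_mul_of_nonneg_right (bit_le_one n x)
    (show (0:ℝ) ≤ 2 / 3 ^ (n+1) by positivity)
  simpa using this

lemma cantorFun_mem (x : ℝ) : cantorFun x ∈ Set.Icc (0:ℝ) 1 :=
  ⟨cantorFun_nonneg x, cantorFun_le_one x⟩

lemma cantorFun_measurable : Measurable cantorFun := by
  have h : ∀ x, Tendsto (fun N => ∑ n ∈ Finset.range N, bit n x * (2 / 3 ^ (n+1)))
      atTop (𝓝 (cantorFun x)) := fun x => (summable_bit x).hasSum.tendsto_sum_nat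
  exact measurable_of_tendsto_metrizable
    (fun N => Finset.measurable_sum _ fun n _ => (bit_measurable n).mul_const _)
    (tendsto_pi_nhds.2 h)

lemma cantorFun_shift (x : ℝ) :
    cantorFun x = bit 0 x * (2/3) + cantorFun (2 * x) / 3 := by
  rw [cantorFun, (summable_bit x).tsum_eq_zero_add]
  congr 1
  · norm_num
  · rw [cantorFun, div_eq_mul_inv, ← tsum_mul_right]
    refine tsum_congr fun n => ?_
    rw [bit_succ n x]
    rw [show (2:ℝ) / 3 ^ (n+1+1) = (2 / 3 ^ (n+1)) * 3⁻¹ by rw [pow_succ]; ring]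
    ring

lemma cantorFun_shift' (x : ℝ) :
    cantorFun x = bit 0 x * (2/3) + cantorFun (2 * x - 1) / 3 := by
  rw [cantorFun, (summable_bit x).tsum_eq_zero_add]
  congr 1
  · norm_num
  · rw [cantorFun, div_eq_mul_inv, ← tsum_mul_right]
    refine tsum_congr fun n => ?_
    rw [bit_succ' n x]
    rw [show (2:ℝ) / 3 ^ (n+1+1) = (2 / 3 ^ (n+1)) * 3⁻¹ by rw [pow_succ]; ring]
    ring

lemma bit_zero_of_lt_half {x : ℝ} (h0 : 0 ≤ x) (h1 : x < 1/2) : bit 0 x = 0 := by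
  unfold bit
  rw [pow_zero, mul_one, Int.fract_eq_self.2 ⟨h0, by linarith⟩]
  exact if_pos h1

lemma bit_zero_of_ge_half {x : ℝ} (h0 : 1/2 ≤ x) (h1 : x < 1) : bit 0 x = 1 := by
  unfold bit
  rw [pow_zero, mul_one, Int.fract_eq_self.2 ⟨by linarith, h1⟩]
  exact if_neg (by linarith)

lemma cantorFun_lt_half {x : ℝ} (h0 : 0 ≤ x) (h1 : x < 1/2) :
    cantorFun x = cantorFun (2 * x) / 3 := by
  rw [cantorFun_shift x, bit_zero_of_lt_half h0 h1]; ring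

lemma cantorFun_ge_half {x : ℝ} (h0 : 1/2 ≤ x) (h1 : x < 1) :
    cantorFun x = cantorFun (2 * x - 1) / 3 + 2/3 := by
  rw [cantorFun_shift' x, bit_zero_of_ge_half h0 h1]; ring

/-- The Cantor measure, as the pushforward of Lebesgue measure on `[0,1]` under `cantorFun`. -/
def cantorLimit : Measure ℝ := Measure.map cantorFun (volume.restrict (Set.Icc 0 1))

instance : IsProbabilityMeasure (volume.restrict (Set.Icc (0:ℝ) 1)) :=
  ⟨by rw [Measure.restrict_apply_univ, Real.volume_Icc]; norm_num⟩

instance : IsProbabilityMeasure cantorLimit :=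
  Measure.isProbabilityMeasure_map cantorFun_measurable.aemeasurable

lemma cantorLimit_integral (f : ℝ → ℝ) (hf : Continuous f) :
    ∫ x, f x ∂cantorLimit = ∫ x in Set.Icc (0:ℝ) 1, f (cantorFun x) :=
  integral_map cantorFun_measurable.aemeasurable hf.aestronglyMeasurable

lemma cantorLimit_ae : ∀ᵐ x ∂cantorLimit, x ∈ Set.Icc (0:ℝ) 1 := by
  have h0 : cantorLimit (Set.Icc (0:ℝ) 1)ᶜ = 0 := by
    rw [cantorLimit, Measure.map_apply cantorFun_measurable measurableSet_Icc.compl]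
    have : cantorFun ⁻¹' (Set.Icc (0:ℝ) 1)ᶜ = ∅ :=
      Set.eq_empty_iff_forall_notMem.2 fun x hx => hx (cantorFun_mem x)
    rw [this, measure_empty]
  exact ae_iff.2 h0

lemma integrableOn_comp_cantorFun (f : ℝ → ℝ) (hf : Continuous f) {s : Set ℝ}
    (hs : volume s < ⊤) :
    IntegrableOn (fun x => f (cantorFun x)) s volume := by
  obtain ⟨M, hM⟩ := isCompact_Icc.exists_bound_of_continuousOn hf.continuousOn
  refine Integrable.mono' (g := fun _ => M) (integrableOn_const hs.ne enorm_ne_top)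
    ((hf.measurable.comp cantorFun_measurable).aestronglyMeasurable) ?_
  exact ae_of_all _ fun x => hM _ (cantorFun_mem x)

lemma piece_left (f : ℝ → ℝ) (hf : Continuous f) :
    ∫ x in Set.Ico (0:ℝ) (1/2), f (cantorFun x)
      = (1/2) * ∫ y in Set.Ico (0:ℝ) 1, f (cantorFun y / 3) := by
  set h : ℝ → ℝ := (Set.Ico (0:ℝ) 1).indicator (fun y => f (cantorFun y / 3)) with hh
  have step1 : ∫ x in Set.Ico (0:ℝ) (1/2), f (cantorFun x)
      = ∫ x in Set.Ico (0:ℝ) (1/2), f (cantorFun (2*x) / 3) := by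
    refine setIntegral_congr_fun measurableSet_Ico fun x hx => ?_
    rw [cantorFun_lt_half hx.1 hx.2]
  have step2 : ∀ x : ℝ, (Set.Ico (0:ℝ) (1/2)).indicator
      (fun x => f (cantorFun (2*x) / 3)) x = h (2 * x) := by
    intro x
    rw [hh]
    by_cases hx : x ∈ Set.Ico (0:ℝ) (1/2)
    · rw [Set.indicator_of_mem hx, Set.indicator_of_mem (Set.mem_Ico.2 ⟨by linarith [hx.1], by linarith [hx.2]⟩)]
    · rw [Set.indicator_of_notMem hx, Set.indicator_of_notMem]
      intro hmem
      rcases Set.mem_Ico.1 hmem with ⟨h1, h2⟩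
      exact hx (Set.mem_Ico.2 ⟨by linarith, by linarith⟩)
  rw [step1, ← integral_indicator measurableSet_Ico]
  calc ∫ x, (Set.Ico (0:ℝ) (1/2)).indicator (fun x => f (cantorFun (2*x) / 3)) x
      = ∫ x, h (2 * x) := by exact integral_congr_ae (ae_of_all _ step2)
    _ = |(2:ℝ)⁻¹| • ∫ y, h y := MeasureTheory.Measure.integral_comp_mul_left h 2
    _ = (1/2) * ∫ y in Set.Ico (0:ℝ) 1, f (cantorFun y / 3) := by
        rw [hh, integral_indicator measurableSet_Ico]
        norm_num

lemma piece_right (f : ℝ → ℝ) (hf : Continuous f) :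
    ∫ x in Set.Ico (1/2:ℝ) 1, f (cantorFun x)
      = (1/2) * ∫ y in Set.Ico (0:ℝ) 1, f (cantorFun y / 3 + 2/3) := by
  set h : ℝ → ℝ := (Set.Ico (0:ℝ) 1).indicator (fun y => f (cantorFun y / 3 + 2/3)) with hh
  have step1 : ∫ x in Set.Ico (1/2:ℝ) 1, f (cantorFun x)
      = ∫ x in Set.Ico (1/2:ℝ) 1, f (cantorFun (2*x - 1) / 3 + 2/3) := by
    refine setIntegral_congr_fun measurableSet_Ico fun x hx => ?_
    rw [cantorFun_ge_half hx.1 hx.2]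
  have step2 : ∀ x : ℝ, (Set.Ico (1/2:ℝ) 1).indicator
      (fun x => f (cantorFun (2*x - 1) / 3 + 2/3)) x = h (2 * x - 1) := by
    intro x
    rw [hh]
    by_cases hx : x ∈ Set.Ico (1/2:ℝ) 1
    · rw [Set.indicator_of_mem hx, Set.indicator_of_mem (Set.mem_Ico.2 ⟨by linarith [hx.1], by linarith [hx.2]⟩)]
    · rw [Set.indicator_of_notMem hx, Set.indicator_of_notMem]
      intro hmem
      rcases Set.mem_Ico.1 hmem with ⟨h1, h2⟩
      exact hx (Set.mem_Ico.2 ⟨by linarith, by linarith⟩)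
  rw [step1, ← integral_indicator measurableSet_Ico]
  calc ∫ x, (Set.Ico (1/2:ℝ) 1).indicator (fun x => f (cantorFun (2*x - 1) / 3 + 2/3)) x
      = ∫ x, h (2 * x - 1) := integral_congr_ae (ae_of_all _ step2)
    _ = ∫ x, (fun y => h (y - 1)) (2 * x) := rfl
    _ = |(2:ℝ)⁻¹| • ∫ y, h (y - 1) := MeasureTheory.Measure.integral_comp_mul_left (fun y => h (y - 1)) 2
    _ = |(2:ℝ)⁻¹| • ∫ y, h y := by rw [integral_sub_right_eq_self h 1]
    _ = (1/2) * ∫ y in Set.Ico (0:ℝ) 1, f (cantorFun y / 3 + 2/3) := by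
        rw [hh, integral_indicator measurableSet_Ico]
        norm_num

lemma cantorLimit_selfSimilar (f : ℝ → ℝ) (hf : Continuous f) :
    ∫ x, f x ∂cantorLimit = ∫ x, Sop f x ∂cantorLimit := by
  have hIcoIcc : (volume : Measure ℝ).restrict (Set.Ico (0:ℝ) 1)
      = volume.restrict (Set.Icc (0:ℝ) 1) := Measure.restrict_congr_set Ico_ae_eq_Icc
  have hsplit : Set.Ico (0:ℝ) 1 = Set.Ico (0:ℝ) (1/2) ∪ Set.Ico (1/2:ℝ) 1 :=
    (Set.Ico_union_Ico_eq_Ico (by norm_num) (by norm_num)).symm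
  have hf3 : Continuous fun y : ℝ => f (y / 3) := by continuity
  have hf3' : Continuous fun y : ℝ => f (y / 3 + 2/3) := by continuity
  have main : ∫ x in Set.Icc (0:ℝ) 1, f (cantorFun x)
      = (1/2) * (∫ y in Set.Ico (0:ℝ) 1, f (cantorFun y / 3))
        + (1/2) * ∫ y in Set.Ico (0:ℝ) 1, f (cantorFun y / 3 + 2/3) := by
    rw [← hIcoIcc, hsplit,
      setIntegral_union (Set.disjoint_left.2 fun x hx hx' => by have h2 := hx.2; have h1 := hx'.1; linarith) measurableSet_Ico
        (integrableOn_comp_cantorFun f hf (by rw [Real.volume_Ico]; exact ENNReal.ofReal_lt_top))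
        (integrableOn_comp_cantorFun f hf (by rw [Real.volume_Ico]; exact ENNReal.ofReal_lt_top)),
      piece_left f hf, piece_right f hf, ← hsplit]
  rw [cantorLimit_integral f hf, cantorLimit_integral (Sop f) (Sop_continuous hf), main]
  have hS : ∫ x in Set.Icc (0:ℝ) 1, Sop f (cantorFun x)
      = ((∫ x in Set.Ico (0:ℝ) 1, f (cantorFun x / 3))
          + ∫ x in Set.Ico (0:ℝ) 1, f (cantorFun x / 3 + 2/3)) / 2 := by
    rw [← hIcoIcc]
    unfold Sop
    rw [integral_div, integral_add
      (integrableOn_comp_cantorFun _ hf3 (by rw [Real.volume_Ico]; exact ENNReal.ofReal_lt_top))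
      (integrableOn_comp_cantorFun _ hf3' (by rw [Real.volume_Ico]; exact ENNReal.ofReal_lt_top))]
  rw [hS]
  ring

lemma cantorLimit_iter (n : ℕ) (f : ℝ → ℝ) (hf : Continuous f) :
    ∫ x, f x ∂cantorLimit = ∫ x, (Sop^[n] f) x ∂cantorLimit := by
  induction n generalizing f with
  | zero => simp
  | succ n ih =>
    rw [cantorLimit_selfSimilar f hf, ih (Sop f) (Sop_continuous hf),
      Function.iterate_succ_apply]

lemma two_measure_bound {μ ν : Measure ℝ} [IsProbabilityMeasure μ] [IsProbabilityMeasure ν]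
    (hμ : ∀ᵐ x ∂μ, x ∈ Set.Icc (0:ℝ) 1) (hν : ∀ᵐ x ∂ν, x ∈ Set.Icc (0:ℝ) 1)
    {f : ℝ → ℝ} {K : NNReal} (hf : LipschitzWith K f) :
    |(∫ x, f x ∂μ) - ∫ x, f x ∂ν| ≤ 2 * K := by
  have h1 := key_bound hμ hf
  have h2 := key_bound hν hf
  calc |(∫ x, f x ∂μ) - ∫ x, f x ∂ν|
      = |((∫ x, f x ∂μ) - f 0) - ((∫ x, f x ∂ν) - f 0)| := by ring_nf
    _ ≤ |(∫ x, f x ∂μ) - f 0| + |(∫ x, f x ∂ν) - f 0| := abs_sub _ _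
    _ ≤ 2 * K := by linarith

lemma approx_diff (n : ℕ) (f : ℝ → ℝ) (K : NNReal) (hf : LipschitzWith K f) :
    |(∫ x, f x ∂cantorApprox n) - ∫ x, f x ∂cantorApprox (n+1)|
      ≤ 2 * K * (3:ℝ)⁻¹ ^ n := by
  have h0 : ∫ x, f x ∂cantorApprox n = ∫ x, (Sop^[n] f) x ∂cantorApprox 0 := by
    have := mu_shift 0 n f hf.continuous
    simpa using this
  have h1 : ∫ x, f x ∂cantorApprox (n+1) = ∫ x, (Sop^[n] f) x ∂cantorApprox 1 := by
    have := mu_shift 1 n f hf.continuous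
    rwa [Nat.add_comm 1 n] at this
  rw [h0, h1]
  have hb := two_measure_bound (cantorApprox_ae 0) (cantorApprox_ae 1)
    (Sop_iter_lipschitz n hf)
  calc |(∫ x, (Sop^[n] f) x ∂cantorApprox 0) - ∫ x, (Sop^[n] f) x ∂cantorApprox 1|
      ≤ 2 * ((K * 3⁻¹ ^ n : NNReal) : ℝ) := hb
    _ = 2 * K * (3:ℝ)⁻¹ ^ n := by push_cast; ring

lemma limit_diff (n : ℕ) (f : ℝ → ℝ) (K : NNReal) (hf : LipschitzWith K f) :
    |(∫ x, f x ∂cantorApprox n) - ∫ x, f x ∂cantorLimit| ≤ 2 * K * (3:ℝ)⁻¹ ^ n := by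
  have h0 : ∫ x, f x ∂cantorApprox n = ∫ x, (Sop^[n] f) x ∂cantorApprox 0 := by
    have := mu_shift 0 n f hf.continuous
    simpa using this
  rw [h0, cantorLimit_iter n f hf.continuous]
  have hb := two_measure_bound (cantorApprox_ae 0) cantorLimit_ae (Sop_iter_lipschitz n hf)
  calc |(∫ x, (Sop^[n] f) x ∂cantorApprox 0) - ∫ x, (Sop^[n] f) x ∂cantorLimit|
      ≤ 2 * ((K * 3⁻¹ ^ n : NNReal) : ℝ) := hb
    _ = 2 * K * (3:ℝ)⁻¹ ^ n := by push_cast; ring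

lemma integrable_cantorApprox (n : ℕ) (f : ℝ → ℝ) (hf : Continuous f) :
    Integrable f (cantorApprox n) := by
  rw [cantorApprox]
  exact (hf.continuousOn.integrableOn_compact (cantorStage_isCompact n)).smul_measure
    (ENNReal.pow_ne_top (ENNReal.div_lt_top (by norm_num) (by norm_num)).ne)

lemma integrable_cantorLimit (f : ℝ → ℝ) (hf : Continuous f) :
    Integrable f cantorLimit := by
  rw [cantorLimit,
    integrable_map_measure hf.aestronglyMeasurable cantorFun_measurable.aemeasurable]
  exact integrableOn_comp_cantorFun f hf (by rw [Real.volume_Icc]; exact ENNReal.ofReal_lt_top)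

lemma close_integral {ν : Measure ℝ} [IsProbabilityMeasure ν]
    (hae : ∀ᵐ x ∂ν, x ∈ Set.Icc (0:ℝ) 1) {f q : ℝ → ℝ}
    (hfint : Integrable f ν) (hqint : Integrable q ν) {δ : ℝ}
    (hclose : ∀ x ∈ Set.Icc (0:ℝ) 1, |f x - q x| ≤ δ) :
    |(∫ x, f x ∂ν) - ∫ x, q x ∂ν| ≤ δ := by
  rw [← integral_sub hfint hqint]
  calc |∫ x, (f x - q x) ∂ν| = ‖∫ x, (f x - q x) ∂ν‖ := rfl
    _ ≤ δ * (ν Set.univ).toReal := norm_integral_le_of_norm_le_const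
        (by filter_upwards [hae] with x hx; exact hclose x hx)
    _ = δ := by simp

lemma exists_lipschitz_approx (f : ℝ → ℝ) (hf : Continuous f) {δ : ℝ} (hδ : 0 < δ) :
    ∃ (q : ℝ → ℝ) (K : NNReal), LipschitzWith K q ∧
      ∀ x ∈ Set.Icc (0:ℝ) 1, |f x - q x| ≤ δ := by
  obtain ⟨p, hp⟩ := exists_polynomial_near_of_continuousOn 0 1 f hf.continuousOn δ hδ
  set clamp : ℝ → ℝ := fun x => (Set.projIcc (0:ℝ) 1 zero_le_one x : ℝ) with hclamp
  have hclamp_mem : ∀ x, clamp x ∈ Set.Icc (0:ℝ) 1 := fun x => (Set.projIcc _ _ _ x).2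
  have hclamp_lip : ∀ x y, dist (clamp x) (clamp y) ≤ dist x y := by
    intro x y
    have h1 := (LipschitzWith.projIcc (zero_le_one (α := ℝ))).dist_le_mul x y
    calc dist (clamp x) (clamp y)
        = dist (Set.projIcc (0:ℝ) 1 zero_le_one x) (Set.projIcc (0:ℝ) 1 zero_le_one y) :=
          (Subtype.dist_eq _ _).symm
      _ ≤ 1 * dist x y := by exact_mod_cast h1
      _ = dist x y := one_mul _
  obtain ⟨M, hM⟩ := isCompact_Icc.exists_bound_of_continuousOn
    (p.derivative.continuous_aeval.continuousOn (s := Set.Icc (0:ℝ) 1))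
  have hM' : ∀ x ∈ Set.Icc (0:ℝ) 1, ‖p.derivative.eval x‖ ≤ M := by
    intro x hx
    simpa [Polynomial.aeval_def, Polynomial.eval₂_eq_eval_map] using hM x hx
  refine ⟨fun x => p.eval (clamp x), Real.toNNReal M,
    LipschitzWith.of_dist_le_mul fun x y => ?_, fun x hx => ?_⟩
  · have hdiff : ∀ t ∈ Set.Icc (0:ℝ) 1, DifferentiableAt ℝ (fun t => p.eval t) t :=
      fun t _ => p.differentiableAt
    have hbound : ∀ t ∈ Set.Icc (0:ℝ) 1, ‖deriv (fun t => p.eval t) t‖ ≤ M := by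
      intro t ht
      rw [Polynomial.deriv]
      exact hM' t ht
    have h1 : ‖p.eval (clamp x) - p.eval (clamp y)‖ ≤ M * ‖clamp x - clamp y‖ :=
      Convex.norm_image_sub_le_of_norm_deriv_le hdiff hbound (convex_Icc 0 1)
        (hclamp_mem y) (hclamp_mem x)
    have hMnn : 0 ≤ M := le_trans (norm_nonneg _) (hM' 0 (by norm_num))
    calc dist (p.eval (clamp x)) (p.eval (clamp y))
        = ‖p.eval (clamp x) - p.eval (clamp y)‖ := rfl
      _ ≤ M * ‖clamp x - clamp y‖ := h1
      _ = M * dist (clamp x) (clamp y) := rfl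
      _ ≤ M * dist x y := mul_le_mul_of_nonneg_left (hclamp_lip x y) hMnn
      _ ≤ (Real.toNNReal M : ℝ) * dist x y := by
          apply mul_le_mul_of_nonneg_right _ dist_nonneg
          rw [Real.coe_toNNReal']
          exact le_max_left _ _
  · have hcx : clamp x = x := by
      rw [hclamp]
      simp only [Set.projIcc_of_mem zero_le_one hx]
    show |f x - p.eval (clamp x)| ≤ δ
    rw [hcx, abs_sub_comm]
    exact (hp x hx).le

theorem cantorApprox_converges' :
    (∃ C : ℝ, ∀ (n : ℕ) (f : ℝ → ℝ) (K : NNReal), LipschitzWith K f →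
      |(∫ x, f x ∂cantorApprox n) - ∫ x, f x ∂cantorApprox (n + 1)| ≤
        C * K * (3 : ℝ)⁻¹ ^ n) ∧
    (∀ (f : ℝ → ℝ) (K : NNReal), LipschitzWith K f →
      ∃ L : ℝ, Tendsto (fun n => ∫ x, f x ∂cantorApprox n) atTop (𝓝 L)) ∧
    (∃ μ : Measure ℝ, IsProbabilityMeasure μ ∧
      ∀ f : ℝ → ℝ, Continuous f →
        Tendsto (fun n => ∫ x, f x ∂cantorApprox n) atTop (𝓝 (∫ x, f x ∂μ))) := by
  have htend : ∀ (c : ℝ), Tendsto (fun n : ℕ => c * (3:ℝ)⁻¹ ^ n) atTop (𝓝 0) := by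
    intro c
    have := (tendsto_pow_atTop_nhds_zero_of_lt_one (by norm_num : (0:ℝ) ≤ 3⁻¹)
      (by norm_num : (3:ℝ)⁻¹ < 1)).const_mul c
    simpa using this
  have key : ∀ (f : ℝ → ℝ) (K : NNReal), LipschitzWith K f →
      Tendsto (fun n => ∫ x, f x ∂cantorApprox n) atTop (𝓝 (∫ x, f x ∂cantorLimit)) := by
    intro f K hf
    rw [tendsto_iff_dist_tendsto_zero]
    apply squeeze_zero (fun n => dist_nonneg) (fun n => ?_) (htend (2 * K))
    rw [Real.dist_eq]
    exact limit_diff n f K hf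
  refine ⟨⟨2, fun n f K hf => approx_diff n f K hf⟩,
    fun f K hf => ⟨∫ x, f x ∂cantorLimit, key f K hf⟩,
    ⟨cantorLimit, inferInstance, fun f hf => ?_⟩⟩
  rw [Metric.tendsto_atTop]
  intro ε hε
  obtain ⟨q, K, hq, hclose⟩ := exists_lipschitz_approx f hf (show (0:ℝ) < ε/4 by linarith)
  have hmid : Tendsto (fun n : ℕ => 2 * (K:ℝ) * 3⁻¹ ^ n) atTop (𝓝 0) := htend _
  have hev : ∀ᶠ n in atTop, 2 * (K:ℝ) * 3⁻¹ ^ n < ε/4 :=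
    hmid.eventually_lt_const (by linarith)
  obtain ⟨N, hN⟩ := eventually_atTop.1 hev
  refine ⟨N, fun n hn => ?_⟩
  have h1 : |(∫ x, f x ∂cantorApprox n) - ∫ x, q x ∂cantorApprox n| ≤ ε/4 :=
    close_integral (cantorApprox_ae n) (integrable_cantorApprox n f hf)
      (integrable_cantorApprox n q hq.continuous) hclose
  have h2 : |(∫ x, q x ∂cantorApprox n) - ∫ x, q x ∂cantorLimit| ≤ 2 * K * (3:ℝ)⁻¹ ^ n :=
    limit_diff n q K hq
  have h3 : |(∫ x, f x ∂cantorLimit) - ∫ x, q x ∂cantorLimit| ≤ ε/4 :=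
    close_integral cantorLimit_ae (integrable_cantorLimit f hf)
      (integrable_cantorLimit q hq.continuous) hclose
  have h4 := hN n hn
  rw [Real.dist_eq]
  have habs : |(∫ x, f x ∂cantorApprox n) - ∫ x, f x ∂cantorLimit|
      ≤ |(∫ x, f x ∂cantorApprox n) - ∫ x, q x ∂cantorApprox n|
        + |(∫ x, q x ∂cantorApprox n) - ∫ x, q x ∂cantorLimit|
        + |(∫ x, f x ∂cantorLimit) - ∫ x, q x ∂cantorLimit| := by
    have := abs_sub ((∫ x, f x ∂cantorApprox n) - ∫ x, q x ∂cantorApprox n)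
      (((∫ x, f x ∂cantorLimit) - ∫ x, q x ∂cantorLimit)
        - ((∫ x, q x ∂cantorApprox n) - ∫ x, q x ∂cantorLimit))
    calc |(∫ x, f x ∂cantorApprox n) - ∫ x, f x ∂cantorLimit|
        = |((∫ x, f x ∂cantorApprox n) - ∫ x, q x ∂cantorApprox n)
            - (((∫ x, f x ∂cantorLimit) - ∫ x, q x ∂cantorLimit)
              - ((∫ x, q x ∂cantorApprox n) - ∫ x, q x ∂cantorLimit))| := by ring_nf
      _ ≤ |(∫ x, f x ∂cantorApprox n) - ∫ x, q x ∂cantorApprox n|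
            + |((∫ x, f x ∂cantorLimit) - ∫ x, q x ∂cantorLimit)
              - ((∫ x, q x ∂cantorApprox n) - ∫ x, q x ∂cantorLimit)| := abs_sub _ _
      _ ≤ _ := by
          have h5 := abs_sub ((∫ x, f x ∂cantorLimit) - ∫ x, q x ∂cantorLimit)
            ((∫ x, q x ∂cantorApprox n) - ∫ x, q x ∂cantorLimit)
          linarith
  linarith


end CantorAux
/-- for every Lipschitz `f : [0,1] → ℝ` the integrals `∫ f dμ_n` converge as
`n → ∞`; in fact `|∫ f dμ_n − ∫ f dμ_{n+1}| ≤ C·Lip(f)·3⁻ⁿ` for a universal constant `C`;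
consequently `(μ_n)` converges weakly to a (probability) measure, the standard Cantor
measure. -/
theorem cantorApprox_converges :
    (∃ C : ℝ, ∀ (n : ℕ) (f : ℝ → ℝ) (K : NNReal), LipschitzWith K f →
      |(∫ x, f x ∂cantorApprox n) - ∫ x, f x ∂cantorApprox (n + 1)| ≤
        C * K * (3 : ℝ)⁻¹ ^ n) ∧
    (∀ (f : ℝ → ℝ) (K : NNReal), LipschitzWith K f →
      ∃ L : ℝ, Tendsto (fun n => ∫ x, f x ∂cantorApprox n) atTop (𝓝 L)) ∧
    (∃ μ : Measure ℝ, IsProbabilityMeasure μ ∧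
      ∀ f : ℝ → ℝ, Continuous f →
        Tendsto (fun n => ∫ x, f x ∂cantorApprox n) atTop (𝓝 (∫ x, f x ∂μ))) := by
  exact cantorApprox_converges'

end
end

section
/- For open sets U₁ ⊆ ℝⁿ and U₂ ⊆ ℝᵐ, the Cartesian wedge product of Dirac chains, defined on k- and ℓ-elements by (p;α) ×̂ (q;β) := ((p,q); ι₁*α ∧ ι₂*β) where ι₁, ι₂ are the inclusions of ℝⁿ and ℝᵐ into ℝⁿ⁺ᵐ, satisfies: if P ×̂ Q = 0 for Dirac chains P ∈ A_k(U₁), Q ∈ A_ℓ(U₂), then P = 0 or Q = 0. -/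
open ExteriorAlgebra
open scoped TensorProduct

set_option synthInstance.maxHeartbeats 1000000
set_option maxHeartbeats 1000000

noncomputable section

lemma tmul_eq_zero_aux {A B : Type*} [AddCommGroup A] [Module ℝ A] [AddCommGroup B]
    [Module ℝ B] (a : A) (b : B) (h : a ⊗ₜ[ℝ] b = 0) : a = 0 ∨ b = 0 := by
  by_cases ha : a = 0
  · exact Or.inl ha
  right
  obtain ⟨φ, hφ⟩ : ∃ φ : Module.Dual ℝ A, φ a ≠ 0 := by
    by_contra hc
    push_neg at hc
    exact ha ((Module.forall_dual_apply_eq_zero_iff ℝ a).mp hc)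
  have h2 := congrArg ((TensorProduct.lid ℝ B).toLinearMap.comp
      (TensorProduct.map φ LinearMap.id)) h
  simp only [LinearMap.comp_apply, TensorProduct.map_tmul, LinearMap.id_apply,
    LinearEquiv.coe_coe, TensorProduct.lid_tmul, map_zero] at h2
  exact (smul_eq_zero.mp h2).resolve_left hφ

lemma exterior_inl_mul_inr_eq_zero {M N : Type*} [AddCommGroup M] [Module ℝ M]
    [AddCommGroup N] [Module ℝ N]
    (α : ExteriorAlgebra ℝ M) (β : ExteriorAlgebra ℝ N)
    (h : ExteriorAlgebra.map (LinearMap.inl ℝ M N) α *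
      ExteriorAlgebra.map (LinearMap.inr ℝ M N) β = 0) :
    α = 0 ∨ β = 0 := by
  classical
  set Q₁ : QuadraticForm ℝ M := 0 with hQ₁
  set Q₂ : QuadraticForm ℝ N := 0 with hQ₂
  have hQ : ∀ x, (Q₁.prod Q₂) x = (0 : QuadraticForm ℝ (M × N)) x := by
    intro x; simp [QuadraticMap.prod_apply, hQ₁, hQ₂]
  let iso : (Q₁.prod Q₂).IsometryEquiv (0 : QuadraticForm ℝ (M × N)) :=
    { LinearEquiv.refl ℝ (M × N) with map_app' := fun x => (hQ x).symm }
  let ε : CliffordAlgebra (Q₁.prod Q₂) ≃ₐ[ℝ] ExteriorAlgebra ℝ (M × N) :=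
    CliffordAlgebra.equivOfIsometry iso
  have hl : ε.toAlgHom.comp (CliffordAlgebra.map (QuadraticMap.Isometry.inl Q₁ Q₂)) =
      ExteriorAlgebra.map (LinearMap.inl ℝ M N) := by
    apply CliffordAlgebra.hom_ext
    refine LinearMap.ext fun mv => ?_
    simp [ε, iso, ExteriorAlgebra.map, CliffordAlgebra.equivOfIsometry]
    erw [CliffordAlgebra.map_apply_ι]
    rfl
  have hr : ε.toAlgHom.comp (CliffordAlgebra.map (QuadraticMap.Isometry.inr Q₁ Q₂)) =
      ExteriorAlgebra.map (LinearMap.inr ℝ M N) := by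
    apply CliffordAlgebra.hom_ext
    refine LinearMap.ext fun mv => ?_
    simp [ε, iso, ExteriorAlgebra.map, CliffordAlgebra.equivOfIsometry]
    erw [CliffordAlgebra.map_apply_ι]
    rfl
  have hlα : ε (CliffordAlgebra.map (QuadraticMap.Isometry.inl Q₁ Q₂) α) =
      ExteriorAlgebra.map (LinearMap.inl ℝ M N) α := DFunLike.congr_fun hl α
  have hrβ : ε (CliffordAlgebra.map (QuadraticMap.Isometry.inr Q₁ Q₂) β) =
      ExteriorAlgebra.map (LinearMap.inr ℝ M N) β := DFunLike.congr_fun hr β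
  have h2 : CliffordAlgebra.map (QuadraticMap.Isometry.inl Q₁ Q₂) α *
      CliffordAlgebra.map (QuadraticMap.Isometry.inr Q₁ Q₂) β = 0 := by
    apply ε.injective
    rw [map_mul, map_zero, hlα, hrβ, h]
  -- now move to the graded tensor product via `ofProd`
  have hofl : (CliffordAlgebra.ofProd Q₁ Q₂).comp
      (CliffordAlgebra.map (QuadraticMap.Isometry.inl Q₁ Q₂)) =
      GradedTensorProduct.includeLeft (CliffordAlgebra.evenOdd Q₁)
        (CliffordAlgebra.evenOdd Q₂) := by
    apply CliffordAlgebra.hom_ext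
    refine LinearMap.ext fun mv => ?_
    simp [CliffordAlgebra.ofProd_ι_mk]
  have hofr : (CliffordAlgebra.ofProd Q₁ Q₂).comp
      (CliffordAlgebra.map (QuadraticMap.Isometry.inr Q₁ Q₂)) =
      GradedTensorProduct.includeRight (CliffordAlgebra.evenOdd Q₁)
        (CliffordAlgebra.evenOdd Q₂) := by
    apply CliffordAlgebra.hom_ext
    refine LinearMap.ext fun mv => ?_
    simp [CliffordAlgebra.ofProd_ι_mk]
  have h3 : (α ᵍ⊗ₜ[ℝ] β :
      CliffordAlgebra.evenOdd Q₁ ᵍ⊗[ℝ] CliffordAlgebra.evenOdd Q₂) = 0 := by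
    have h5 := congrArg (CliffordAlgebra.ofProd Q₁ Q₂) h2
    rw [map_mul, map_zero, ← AlgHom.comp_apply, hofl, ← AlgHom.comp_apply, hofr,
      GradedTensorProduct.includeLeft_apply, GradedTensorProduct.includeRight_apply,
      GradedTensorProduct.tmul_one_mul_one_tmul] at h5
    exact h5
  have h4 : (α ⊗ₜ[ℝ] β : ExteriorAlgebra ℝ M ⊗[ℝ] ExteriorAlgebra ℝ N) = 0 := by
    have := congrArg (GradedTensorProduct.of ℝ (CliffordAlgebra.evenOdd Q₁)
      (CliffordAlgebra.evenOdd Q₂)).symm h3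
    simpa using this
  exact tmul_eq_zero_aux α β h4

variable (n m : ℕ)

/-- The submodule of `k`-vectors in the exterior algebra of a module: the span of the simple
`k`-fold wedge products. -/
def kVectors (M : Type*) [AddCommGroup M] [Module ℝ M] (k : ℕ) :
    Submodule ℝ (ExteriorAlgebra ℝ M) :=
  Submodule.span ℝ {x | ∃ u : Fin k → M, x = ExteriorAlgebra.ιMulti ℝ k u}

/-- The Cartesian wedge product of Dirac chains: on elements,
`(p;α) ×̂ (q;β) := ((p,q); ι₁*α ∧ ι₂*β)`, extended bilinearly, where `ι₁, ι₂` are the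
inclusions of `ℝⁿ` and `ℝᵐ` into `ℝⁿ⁺ᵐ = ℝⁿ × ℝᵐ`. -/
def cwedge
    (P : EuclideanSpace ℝ (Fin n) →₀ ExteriorAlgebra ℝ (EuclideanSpace ℝ (Fin n)))
    (Q : EuclideanSpace ℝ (Fin m) →₀ ExteriorAlgebra ℝ (EuclideanSpace ℝ (Fin m))) :
    (EuclideanSpace ℝ (Fin n) × EuclideanSpace ℝ (Fin m)) →₀
      ExteriorAlgebra ℝ (EuclideanSpace ℝ (Fin n) × EuclideanSpace ℝ (Fin m)) :=
  P.sum fun p α => Q.sum fun q β =>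
    Finsupp.single (p, q)
      (ExteriorAlgebra.map (LinearMap.inl ℝ (EuclideanSpace ℝ (Fin n))
          (EuclideanSpace ℝ (Fin m))) α *
        ExteriorAlgebra.map (LinearMap.inr ℝ (EuclideanSpace ℝ (Fin n))
          (EuclideanSpace ℝ (Fin m))) β)

/-- for open sets `U₁ ⊆ ℝⁿ`, `U₂ ⊆ ℝᵐ` and Dirac chains `P ∈ A_k(U₁)`,
`Q ∈ A_ℓ(U₂)`, if the Cartesian wedge product `P ×̂ Q` vanishes, then `P = 0` or `Q = 0`. -/
theorem cwedge_eq_zero_iff (k ℓ : ℕ)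
    (U₁ : Set (EuclideanSpace ℝ (Fin n))) (hU₁ : IsOpen U₁)
    (U₂ : Set (EuclideanSpace ℝ (Fin m))) (hU₂ : IsOpen U₂)
    (P : EuclideanSpace ℝ (Fin n) →₀ ExteriorAlgebra ℝ (EuclideanSpace ℝ (Fin n)))
    (Q : EuclideanSpace ℝ (Fin m) →₀ ExteriorAlgebra ℝ (EuclideanSpace ℝ (Fin m)))
    (hPk : ∀ p, P p ∈ kVectors (EuclideanSpace ℝ (Fin n)) k)
    (hQl : ∀ q, Q q ∈ kVectors (EuclideanSpace ℝ (Fin m)) ℓ)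
    (hPsupp : ∀ p ∈ P.support, p ∈ U₁)
    (hQsupp : ∀ q ∈ Q.support, q ∈ U₂)
    (h : cwedge n m P Q = 0) :
    P = 0 ∨ Q = 0 := by
  classical
  by_cases hP : P = 0
  · exact Or.inl hP
  right
  obtain ⟨p₀, hp₀⟩ : ∃ p, P p ≠ 0 := by
    by_contra hc
    push_neg at hc
    exact hP (Finsupp.ext hc)
  ext q₀
  rw [Finsupp.zero_apply]
  by_contra hq₀
  have hps : p₀ ∈ P.support := Finsupp.mem_support_iff.mpr hp₀
  have hqs : q₀ ∈ Q.support := Finsupp.mem_support_iff.mpr hq₀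
  have h0 := DFunLike.congr_fun h (p₀, q₀)
  rw [Finsupp.zero_apply, cwedge] at h0
  simp only [Finsupp.sum_apply, Finsupp.single_apply] at h0
  rw [Finsupp.sum, Finset.sum_eq_single_of_mem p₀ hps (fun p _ hp => by
    exact Finset.sum_eq_zero fun q _ =>
      if_neg fun hc => hp (congrArg Prod.fst hc))] at h0
  rw [Finsupp.sum, Finset.sum_eq_single_of_mem q₀ hqs (fun q _ hq => by
    exact if_neg fun hc => hq (congrArg Prod.snd hc))] at h0
  rw [if_pos rfl] at h0
  rcases exterior_inl_mul_inr_eq_zero (P p₀) (Q q₀) h0 with h' | h'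
  · exact hp₀ h'
  · exact hq₀ h'

end
end
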